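/- With h defined from binary digits by h(k) = Σ_{i≥1} β_i 2^{⌊(i−1)/2⌋}: if k and ℓ are odd and h(k+ℓ) = h(k) + h(ℓ) + 1, then k ≡ ℓ ≡ 1 (mod 4). -/

import Mathlib

/-- `h k = Σ_{i≥1} β_i 2^{⌊(i−1)/2⌋}` where `β_i` are the binary digits of `k`. -/
def h (k : ℕ) : ℕ := ∑ i ∈ Finset.Icc 1 k, if k.testBit i then 2 ^ ((i - 1) / 2) else 0

def g (n : ℕ) : ℕ :=
  if h0 : n = 0 then 0 else n % 2 + n / 2 % 2 + 2 * g (n / 4)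
decreasing_by exact Nat.div_lt_self (Nat.pos_of_ne_zero h0) (by norm_num)

lemma g0 : g 0 = 0 := by rw [g]; simp

lemma g_eq (n : ℕ) : g n = n % 2 + n / 2 % 2 + 2 * g (n / 4) := by
  rw [g]
  split
  · subst ‹n = 0›; rw [g]; simp
  · rfl

lemma g4 (a r : ℕ) (hr : r < 4) : g (4 * a + r) = r % 2 + r / 2 + 2 * g a := by
  rw [g_eq]
  have h1 : (4 * a + r) % 2 = r % 2 := by omega
  have h2 : (4 * a + r) / 2 % 2 = r / 2 := by omega
  have h3 : (4 * a + r) / 4 = a := by omega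
  rw [h1, h2, h3]

lemma g4' (a u : ℕ) : g (4 * a + u) = u % 4 % 2 + u % 4 / 2 + 2 * g (a + u / 4) := by
  rw [show 4 * a + u = 4 * (a + u / 4) + u % 4 from by omega,
    g4 _ _ (Nat.mod_lt _ (by norm_num))]

lemma key (a b r t : ℕ) (hr : r < 4) (ht : t < 4)
    (hA : g (a + b) ≤ g a + g b) (hB : g (a + b + 1) ≤ g a + g b + 1) :
    (g (4 * a + r + (4 * b + t)) ≤ g (4 * a + r) + g (4 * b + t)) ∧
    (g (4 * a + r + (4 * b + t) + 1) ≤ g (4 * a + r) + g (4 * b + t) + 1) ∧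
    (g (4 * a + r + (4 * b + t) + 1) = g (4 * a + r) + g (4 * b + t) + 1 →
      r % 2 = 0 ∧ t % 2 = 0) := by
  have E0 : g (4 * a + r + (4 * b + t)) =
      (r + t) % 4 % 2 + (r + t) % 4 / 2 + 2 * g (a + b + (r + t) / 4) := by
    rw [show 4 * a + r + (4 * b + t) = 4 * (a + b) + (r + t) from by ring, g4']
  have E1 : g (4 * a + r + (4 * b + t) + 1) =
      (r + t + 1) % 4 % 2 + (r + t + 1) % 4 / 2 + 2 * g (a + b + (r + t + 1) / 4) := by
    rw [show 4 * a + r + (4 * b + t) + 1 = 4 * (a + b) + (r + t + 1) from by ring, g4']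
  have Ea := g4 a r hr
  have Eb := g4 b t ht
  interval_cases r <;> interval_cases t <;>
    (norm_num at E0 E1 Ea Eb ⊢; omega)

lemma AB : ∀ N n m : ℕ, n + m ≤ N →
    g (n + m) ≤ g n + g m ∧ g (n + m + 1) ≤ g n + g m + 1 := by
  intro N
  induction N using Nat.strong_induction_on with
  | _ N ih =>
    intro n m hnm
    rcases Nat.eq_zero_or_pos (n + m) with h0 | hpos
    · have hn : n = 0 := by omega
      have hm : m = 0 := by omega
      subst hn; subst hm
      have hg1 : g 1 = 1 := by rw [g_eq]; norm_num [g0]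
      exact ⟨by simp [g0], by simp [g0, hg1]⟩
    · have hlt : n / 4 + m / 4 < n + m := by omega
      have hIH := ih (n / 4 + m / 4) (by omega) (n / 4) (m / 4) (le_refl _)
      have hk := key (n / 4) (m / 4) (n % 4) (m % 4) (by omega) (by omega) hIH.1 hIH.2
      rw [show 4 * (n / 4) + n % 4 = n from by omega,
        show 4 * (m / 4) + m % 4 = m from by omega] at hk
      exact ⟨hk.1, hk.2.1⟩

lemma main_g (n m : ℕ) (he : g (n + m + 1) = g n + g m + 1) : n % 2 = 0 ∧ m % 2 = 0 := by
  have hIH := AB (n / 4 + m / 4) (n / 4) (m / 4) (le_refl _)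
  have hk := key (n / 4) (m / 4) (n % 4) (m % 4) (by omega) (by omega) hIH.1 hIH.2
  rw [show 4 * (n / 4) + n % 4 = n from by omega,
    show 4 * (m / 4) + m % 4 = m from by omega] at hk
  have := hk.2.2 he
  omega

lemma sum_g : ∀ n m : ℕ, m < 4 ^ n →
    g m = ∑ j ∈ Finset.range (2 * n), (if m.testBit j then 2 ^ (j / 2) else 0) := by
  intro n
  induction n with
  | zero =>
    intro m hm
    have : m = 0 := by simpa using hm
    subst this
    simp [g0]
  | succ n ih =>
    intro m hm
    have hrw : 2 * (n + 1) = 2 * n + 1 + 1 := by ring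
    rw [hrw, Finset.sum_range_succ', Finset.sum_range_succ']
    have hb0 : (if m.testBit 0 then (2:ℕ) ^ (0 / 2) else 0) = m % 2 := by
      rcases Nat.even_or_odd m with he | ho
      · have : m % 2 = 0 := Nat.even_iff.mp he
        simp [Nat.testBit_zero, this]
      · have : m % 2 = 1 := Nat.odd_iff.mp ho
        simp [Nat.testBit_zero, this]
    have hb1 : (if m.testBit (0 + 1) then (2:ℕ) ^ ((0 + 1) / 2) else 0) = m / 2 % 2 := by
      rw [Nat.testBit_add_one]
      rcases Nat.even_or_odd (m / 2) with he | ho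
      · have : m / 2 % 2 = 0 := Nat.even_iff.mp he
        simp [Nat.testBit_zero, this]
      · have : m / 2 % 2 = 1 := Nat.odd_iff.mp ho
        simp [Nat.testBit_zero, this]
    have hbs : ∀ j, (if m.testBit (j + 1 + 1) then (2:ℕ) ^ ((j + 1 + 1) / 2) else 0)
        = 2 * (if (m / 4).testBit j then 2 ^ (j / 2) else 0) := by
      intro j
      rw [Nat.testBit_add_one, Nat.testBit_add_one, Nat.div_div_eq_div_mul]
      have : (j + 1 + 1) / 2 = j / 2 + 1 := by omega
      rw [this, pow_succ]
      split <;> ring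
    have hsum : ∑ j ∈ Finset.range (2 * n),
        (if m.testBit (j + 1 + 1) then (2:ℕ) ^ ((j + 1 + 1) / 2) else 0)
        = 2 * ∑ j ∈ Finset.range (2 * n), (if (m / 4).testBit j then 2 ^ (j / 2) else 0) := by
      rw [Finset.mul_sum]
      exact Finset.sum_congr rfl fun j _ => hbs j
    rw [hsum, hb0, hb1, ← ih (m / 4) (by
      have : (4:ℕ) ^ (n + 1) = 4 ^ n * 4 := pow_succ 4 n
      omega), g_eq]
    ring

lemma h_eq_g (k : ℕ) : h k = g (k / 2) := by
  have h1 : h k = ∑ i ∈ Finset.range k,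
      (if (k / 2).testBit i then 2 ^ (i / 2) else 0) := by
    rw [h, ← Finset.Ico_add_one_right_eq_Icc, Finset.sum_Ico_eq_sum_range]
    refine Finset.sum_congr (by norm_num) fun i _ => ?_
    rw [show 1 + i = i + 1 from by ring, Nat.testBit_add_one]
    have : (i + 1 - 1) / 2 = i / 2 := by omega
    rw [this]
  have h2 : ∑ i ∈ Finset.range k, (if (k / 2).testBit i then (2:ℕ) ^ (i / 2) else 0)
      = ∑ i ∈ Finset.range (2 * k), (if (k / 2).testBit i then 2 ^ (i / 2) else 0) := by
    apply Finset.sum_subset (Finset.range_subset_range.mpr (by omega))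
    intro i hi hni
    simp only [Finset.mem_range] at hi hni
    have hik : k ≤ i := by omega
    have : k / 2 < 2 ^ i := by
      calc k / 2 ≤ k := Nat.div_le_self _ _
        _ < 2 ^ k := Nat.lt_two_pow_self (n := k)
        _ ≤ 2 ^ i := Nat.pow_le_pow_right (by norm_num) hik
    rw [Nat.testBit_eq_false_of_lt this]
    simp
  rw [h1, h2, ← sum_g k (k / 2) (by
    calc k / 2 ≤ k := Nat.div_le_self _ _
      _ < 2 ^ k := Nat.lt_two_pow_self (n := k)
      _ ≤ 4 ^ k := Nat.pow_le_pow_left (by norm_num) k)]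

theorem mod_four_of_h_add_eq (k l : ℕ) (hk : Odd k) (hl : Odd l)
    (heq : h (k + l) = h k + h l + 1) : k % 4 = 1 ∧ l % 4 = 1 := by
  have hk2 : k % 2 = 1 := Nat.odd_iff.mp hk
  have hl2 : l % 2 = 1 := Nat.odd_iff.mp hl
  rw [h_eq_g, h_eq_g, h_eq_g] at heq
  have hd : (k + l) / 2 = k / 2 + l / 2 + 1 := by omega
  rw [hd] at heq
  have := main_g (k / 2) (l / 2) heq
  omega
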